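/- The group 1 + Γ(A) is a nilpotent p-group of order p^{4nl}, where l = (p−1)/2, of exponent p, and its nilpotency class is at most p − 1. -/

import Mathlib

noncomputable section
open MonoidAlgebra
abbrev Dg (p : ℕ) := DihedralGroup p
def aa (p : ℕ) : Dg p := DihedralGroup.r 1
def bb (p : ℕ) : Dg p := DihedralGroup.sr 0
abbrev FG (p : ℕ) (F : Type) [Field F] := MonoidAlgebra F (Dg p)
def Asub (p : ℕ) : Subgroup (Dg p) := Subgroup.zpowers (aa p)
def gammaA (p : ℕ) (F : Type) [Field F] : Ideal (FG p F) :=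
  Ideal.span ((fun h => (MonoidAlgebra.of F (Dg p) h : FG p F) - 1) '' (Asub p : Set (Dg p)))

/-- The sign homomorphism `D_{2p} → C₂`, trivial on rotations. -/
def sgn (p : ℕ) : Dg p →* Multiplicative (ZMod 2) where
  toFun g := match g with
    | DihedralGroup.r _ => 1
    | DihedralGroup.sr _ => Multiplicative.ofAdd 1
  map_one' := rfl
  map_mul' := by
    rintro (i | i) (j | j) <;>
      simp only [DihedralGroup.r_mul_r, DihedralGroup.r_mul_sr, DihedralGroup.sr_mul_r,
        DihedralGroup.sr_mul_sr] <;> decide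

/-- `1 + Γ(A)` as a subgroup of the unit group of `FD_{2p}`. -/
def oneGammaU (p : ℕ) (F : Type) [Field F] : Subgroup (FG p F)ˣ where
  carrier := {u | (u : FG p F) - 1 ∈ gammaA p F}
  one_mem' := by simp
  mul_mem' := by
    intro u v hu hv
    have h : ((↑(u * v) : FG p F)) - 1
        = (u : FG p F) * ((v : FG p F) - 1) + ((u : FG p F) - 1) := by
      push_cast
      noncomm_ring
    show ((↑(u * v) : FG p F)) - 1 ∈ gammaA p F
    rw [h]
    exact (gammaA p F).add_mem (Ideal.mul_mem_left _ _ hv) hu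
  inv_mem' := by
    intro u hu
    have h : ((↑u⁻¹ : FG p F)) - 1 = -((↑u⁻¹ : FG p F) * ((u : FG p F) - 1)) := by
      rw [mul_sub, Units.inv_mul, mul_one, neg_sub]
    show ((↑u⁻¹ : FG p F)) - 1 ∈ gammaA p F
    rw [h]
    exact (gammaA p F).neg_mem (Ideal.mul_mem_left _ _ hu)

variable (p : ℕ) (F : Type) [Field F]

def al : FG p F := MonoidAlgebra.of F (Dg p) (aa p) - 1

open DihedralGroup in
lemma move1 (y : FG p F) : ∃ y', al p F * y = y' * al p F := by
  induction y using MonoidAlgebra.induction_on with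
  | of g =>
    rcases g with i | i
    · refine ⟨MonoidAlgebra.of F (Dg p) (r i), ?_⟩
      simp only [al, aa, sub_mul, mul_sub, one_mul, mul_one, ← map_mul, r_mul_r]
      rw [add_comm]
    · refine ⟨-(MonoidAlgebra.of F (Dg p) (sr (i - 1))), ?_⟩
      simp only [al, aa, sub_mul, mul_sub, one_mul, mul_one, neg_mul, ← map_mul, r_mul_sr,
        sr_mul_r, neg_sub, sub_add_cancel]
      abel
  | add f g hf hg =>
    obtain ⟨f', hf⟩ := hf; obtain ⟨g', hg⟩ := hg
    exact ⟨f' + g', by rw [mul_add, hf, hg, add_mul]⟩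
  | smul r f hf =>
    obtain ⟨f', hf⟩ := hf
    exact ⟨r • f', by rw [mul_smul_comm, hf, smul_mul_assoc]⟩

lemma movek (k : ℕ) (y : FG p F) : ∃ y', al p F ^ k * y = y' * al p F ^ k := by
  induction k generalizing y with
  | zero => exact ⟨y, by simp⟩
  | succ k ih =>
    obtain ⟨y₁, h₁⟩ := move1 p F y
    obtain ⟨y₂, h₂⟩ := ih y₁
    exact ⟨y₂, by rw [pow_succ, mul_assoc, h₁, ← mul_assoc, h₂, mul_assoc]⟩

lemma gammaA_eq_span : gammaA p F = Ideal.span {al p F} := by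
  apply le_antisymm
  · rw [gammaA, Ideal.span_le]
    rintro x ⟨h, hh, rfl⟩
    let T : Subgroup (Dg p) :=
      { carrier := {g | (MonoidAlgebra.of F (Dg p) g : FG p F) - 1 ∈ Ideal.span {al p F}}
        one_mem' := by
          show (MonoidAlgebra.of F (Dg p) 1 : FG p F) - 1 ∈ Ideal.span {al p F}
          rw [map_one, sub_self]; exact Ideal.zero_mem _
        mul_mem' := by
          intro g₁ g₂ h₁ h₂
          have : (MonoidAlgebra.of F (Dg p) (g₁ * g₂) : FG p F) - 1
              = MonoidAlgebra.of F (Dg p) g₁ * (MonoidAlgebra.of F (Dg p) g₂ - 1)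
                + (MonoidAlgebra.of F (Dg p) g₁ - 1) := by
            rw [map_mul]; noncomm_ring
          show (MonoidAlgebra.of F (Dg p) (g₁ * g₂) : FG p F) - 1 ∈ Ideal.span {al p F}
          rw [this]
          exact Ideal.add_mem _ (Ideal.mul_mem_left _ _ h₂) h₁
        inv_mem' := by
          intro g hg
          have : (MonoidAlgebra.of F (Dg p) g⁻¹ : FG p F) - 1
              = -(MonoidAlgebra.of F (Dg p) g⁻¹ * (MonoidAlgebra.of F (Dg p) g - 1)) := by
            rw [mul_sub, ← map_mul, inv_mul_cancel, map_one, mul_one, neg_sub]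
          show (MonoidAlgebra.of F (Dg p) g⁻¹ : FG p F) - 1 ∈ Ideal.span {al p F}
          rw [this]
          exact neg_mem (Ideal.mul_mem_left _ _ hg) }
    have hT : Asub p ≤ T := by
      rw [Asub, Subgroup.zpowers_le]
      show (MonoidAlgebra.of F (Dg p) (aa p) : FG p F) - 1 ∈ Ideal.span {al p F}
      exact Ideal.subset_span rfl
    exact hT hh
  · rw [Ideal.span_le, Set.singleton_subset_iff]
    exact Ideal.subset_span ⟨aa p, Subgroup.mem_zpowers _, rfl⟩

lemma mem_gammaA_iff (x : FG p F) : x ∈ gammaA p F ↔ ∃ y, x = y * al p F := by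
  rw [gammaA_eq_span, Ideal.mem_span_singleton']
  exact ⟨fun ⟨a, h⟩ => ⟨a, h.symm⟩, fun ⟨a, h⟩ => ⟨a, h.symm⟩⟩

lemma al_pow_p (hp : p.Prime) [CharP F p] : al p F ^ p = 0 := by
  haveI : Fact p.Prime := ⟨hp⟩
  haveI : CharP (FG p F) p :=
    charP_of_injective_algebraMap (algebraMap F (FG p F)).injective p
  rw [al, sub_pow_char_of_commute _ (Commute.one_right _), one_pow, ← map_pow]
  have : aa p ^ p = 1 := by
    rw [aa, DihedralGroup.r_one_pow]
    rw [ZMod.natCast_self, DihedralGroup.one_def]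
  rw [this, map_one, sub_self]

/-- The chain of left ideals `I k = FG·α^k`. -/
def Ik (k : ℕ) : Ideal (FG p F) := Ideal.span {al p F ^ k}

lemma mem_Ik_iff (k : ℕ) (x : FG p F) : x ∈ Ik p F k ↔ ∃ y, x = y * al p F ^ k := by
  rw [Ik, Ideal.mem_span_singleton']
  exact ⟨fun ⟨a, h⟩ => ⟨a, h.symm⟩, fun ⟨a, h⟩ => ⟨a, h.symm⟩⟩

lemma Ik_mul_mem {k : ℕ} {x : FG p F} (hx : x ∈ Ik p F k) (z : FG p F) :
    x * z ∈ Ik p F k := by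
  rw [mem_Ik_iff] at hx ⊢
  obtain ⟨y, rfl⟩ := hx
  obtain ⟨z', hz⟩ := movek p F k z
  exact ⟨y * z', by rw [mul_assoc, hz, mul_assoc]⟩

lemma Ik_mul_Ik {k m : ℕ} {x y : FG p F} (hx : x ∈ Ik p F k) (hy : y ∈ Ik p F m) :
    x * y ∈ Ik p F (k + m) := by
  rw [mem_Ik_iff] at hx hy ⊢
  obtain ⟨a, rfl⟩ := hx
  obtain ⟨b, rfl⟩ := hy
  obtain ⟨c, hc⟩ := movek p F k b
  refine ⟨a * c, ?_⟩
  rw [mul_assoc, ← mul_assoc (al p F ^ k), hc, mul_assoc, ← pow_add, ← mul_assoc]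

lemma gammaA_eq_I1 : gammaA p F = Ik p F 1 := by
  rw [gammaA_eq_span, Ik, pow_one]

lemma Ip_eq_bot (hp : p.Prime) [CharP F p] : Ik p F p = ⊥ := by
  rw [Ik, al_pow_p p F hp, Ideal.span_singleton_eq_bot]

lemma pow_p_eq_zero (hp : p.Prime) [CharP F p] {x : FG p F} (hx : x ∈ gammaA p F) :
    x ^ p = 0 := by
  have hpow : ∀ k : ℕ, x ^ (k + 1) ∈ Ik p F (k + 1) := by
    intro k
    induction k with
    | zero => rw [pow_one]; rw [gammaA_eq_I1] at hx; exact hx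
    | succ k ih =>
      have := Ik_mul_Ik p F ih (by rw [← gammaA_eq_I1]; exact hx)
      rwa [← pow_succ] at this
  have h2 : x ^ p ∈ Ik p F p := by
    have := hpow (p - 1)
    rwa [Nat.sub_add_cancel hp.one_lt.le] at this
  rw [Ip_eq_bot p F hp] at h2
  exact h2

lemma unit_pow_p (hp : p.Prime) [CharP F p] {x : FG p F} (hx : x ∈ gammaA p F) :
    (1 + x) ^ p = 1 := by
  haveI : Fact p.Prime := ⟨hp⟩
  haveI : CharP (FG p F) p :=
    charP_of_injective_algebraMap (algebraMap F (FG p F)).injective p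
  rw [add_pow_char_of_commute _ (Commute.one_left _), one_pow,
    pow_p_eq_zero p F hp hx, add_zero]

variable {p F} in
lemma coe_mem_gamma (u : (oneGammaU p F)) : ((u : (FG p F)ˣ) : FG p F) - 1 ∈ gammaA p F := u.2

/-- Congruence subgroups `H k = {u ∈ 1+Γ : u ≡ 1 mod I k}`. -/
def Hk (k : ℕ) : Subgroup (oneGammaU p F) where
  carrier := {u | (((u : (FG p F)ˣ) : FG p F)) - 1 ∈ Ik p F k}
  one_mem' := by simp
  mul_mem' := by
    intro u v hu hv
    have h : ((((u * v : oneGammaU p F) : (FG p F)ˣ)) : FG p F) - 1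
        = ((u : (FG p F)ˣ) : FG p F) * (((v : (FG p F)ˣ) : FG p F) - 1)
          + (((u : (FG p F)ˣ) : FG p F) - 1) := by
      push_cast
      noncomm_ring
    show _ - 1 ∈ Ik p F k
    rw [h]
    exact (Ik p F k).add_mem (Ideal.mul_mem_left _ _ hv) hu
  inv_mem' := by
    intro u hu
    have h : (((u⁻¹ : oneGammaU p F) : (FG p F)ˣ) : FG p F) - 1
        = -((((u⁻¹ : oneGammaU p F) : (FG p F)ˣ) : FG p F)
            * (((u : (FG p F)ˣ) : FG p F) - 1)) := by
      rw [mul_sub, mul_one, neg_sub]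
      congr 1
      push_cast
      rw [Units.inv_mul]
    show _ - 1 ∈ Ik p F k
    rw [h]
    exact neg_mem (Ideal.mul_mem_left _ _ hu)

open scoped commutatorElement in
lemma lcs_le_Hk (k : ℕ) :
    lowerCentralSeries (⊤ : Subgroup (oneGammaU p F)) k ≤ Hk p F (k + 1) := by
  induction k with
  | zero =>
    intro u _
    show _ - 1 ∈ Ik p F 1
    rw [← gammaA_eq_I1]
    exact coe_mem_gamma u
  | succ k ih =>
    show ⁅lowerCentralSeries (⊤ : Subgroup (oneGammaU p F)) k, ⊤⁆ ≤ _
    apply Subgroup.commutator_le.mpr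
    intro u hu v _
    have hu' : ((u : (FG p F)ˣ) : FG p F) - 1 ∈ Ik p F (k + 1) := ih hu
    have hv' : ((v : (FG p F)ˣ) : FG p F) - 1 ∈ Ik p F 1 := by
      rw [← gammaA_eq_I1]; exact coe_mem_gamma v
    show ((((⁅u, v⁆ : oneGammaU p F) : (FG p F)ˣ)) : FG p F) - 1 ∈ Ik p F (k + 2)
    set U : FG p F := ((u : (FG p F)ˣ) : FG p F)
    set V : FG p F := ((v : (FG p F)ˣ) : FG p F)
    set U' : FG p F := (((u⁻¹ : oneGammaU p F) : (FG p F)ˣ) : FG p F)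
    set V' : FG p F := (((v⁻¹ : oneGammaU p F) : (FG p F)ˣ) : FG p F)
    have hcomm : ((((⁅u, v⁆ : oneGammaU p F) : (FG p F)ˣ)) : FG p F) - 1
        = ((U - 1) * (V - 1) - (V - 1) * (U - 1)) * (U' * V') := by
      have hUU' : U * U' = 1 := by
        show (((u : (FG p F)ˣ) * ((u⁻¹ : oneGammaU p F) : (FG p F)ˣ) : (FG p F)ˣ) : FG p F) = 1
        norm_cast
        rw [mul_inv_cancel]
        rfl
      have hVV' : V * V' = 1 := by
        show (((v : (FG p F)ˣ) * ((v⁻¹ : oneGammaU p F) : (FG p F)ˣ) : (FG p F)ˣ) : FG p F) = 1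
        norm_cast
        rw [mul_inv_cancel]
        rfl
      have hc : ((((⁅u, v⁆ : oneGammaU p F) : (FG p F)ˣ)) : FG p F) = U * V * U' * V' := by
        rw [commutatorElement_def]
        push_cast
        rfl
      have expand : (U - 1) * (V - 1) - (V - 1) * (U - 1) = U * V - V * U := by noncomm_ring
      have key : (U * V - V * U) * (U' * V') = U * V * U' * V' - V * (U * U') * V' := by
        noncomm_ring
      rw [hc, expand, key, hUU', mul_one, hVV']
    rw [hcomm]
    show _ ∈ Ik p F (k + 1 + 1)
    apply Ik_mul_mem
    have t1 : (U - 1) * (V - 1) ∈ Ik p F (k + 1 + 1) := Ik_mul_Ik p F hu' hv'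
    have t2 : (V - 1) * (U - 1) ∈ Ik p F (k + 1 + 1) := by
      have := Ik_mul_Ik p F hv' hu'
      rwa [add_comm 1 (k+1)] at this
    exact sub_mem t1 t2

lemma Hp_eq_bot (hp : p.Prime) [CharP F p] : Hk p F p = ⊥ := by
  rw [eq_bot_iff]
  intro u hu
  have h : (((u : (FG p F)ˣ)) : FG p F) - 1 ∈ Ik p F p := hu
  rw [Ip_eq_bot p F hp, Ideal.mem_bot, sub_eq_zero] at h
  have : (u : (FG p F)ˣ) = 1 := Units.ext h
  exact Subgroup.mem_bot.mpr (Subtype.ext this)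

lemma lcs_eq_bot (hp : p.Prime) [CharP F p] :
    lowerCentralSeries (⊤ : Subgroup (oneGammaU p F)) (p - 1) = ⊥ := by
  rw [eq_bot_iff, ← Hp_eq_bot p F hp]
  have := lcs_le_Hk p F (p - 1)
  rwa [Nat.sub_add_cancel hp.one_lt.le] at this

lemma nilpotent_oneGammaU (hp : p.Prime) [CharP F p] :
    Group.IsNilpotent (oneGammaU p F) :=
  nilpotent_iff_lowerCentralSeries.mpr ⟨p - 1, lcs_eq_bot p F hp⟩

/-- The character `D_{2p} → F` sending rotations to 1 and reflections to -1. -/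
def chiF : Dg p →* F where
  toFun g := match g with
    | DihedralGroup.r _ => 1
    | DihedralGroup.sr _ => -1
  map_one' := rfl
  map_mul' := by
    rintro (i | i) (j | j) <;>
      simp only [DihedralGroup.r_mul_r, DihedralGroup.r_mul_sr, DihedralGroup.sr_mul_r,
        DihedralGroup.sr_mul_sr] <;> norm_num

def epsP : FG p F →ₐ[F] F := MonoidAlgebra.lift F F (Dg p) 1
def epsM : FG p F →ₐ[F] F := MonoidAlgebra.lift F F (Dg p) (chiF p F)

lemma epsP_of (g : Dg p) : epsP p F (MonoidAlgebra.of F (Dg p) g) = 1 := by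
  rw [epsP, MonoidAlgebra.lift_of]; rfl

lemma epsM_of (g : Dg p) : epsM p F (MonoidAlgebra.of F (Dg p) g) = chiF p F g := by
  rw [epsM, MonoidAlgebra.lift_of]

lemma eps_vanish {x : FG p F} (hx : x ∈ gammaA p F) :
    epsP p F x = 0 ∧ epsM p F x = 0 := by
  have key : ∀ (ε : FG p F →ₐ[F] F), (∀ g : Dg p, ε (MonoidAlgebra.of F (Dg p) g) = chiF p F g ∨
      ε (MonoidAlgebra.of F (Dg p) g) = 1) → x ∈ RingHom.ker (ε : FG p F →+* F) → ε x = 0 :=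
    fun ε _ h => h
  constructor
  · refine (?_ : gammaA p F ≤ RingHom.ker (epsP p F : FG p F →+* F)) hx
    rw [gammaA, Ideal.span_le]
    rintro y ⟨h, _, rfl⟩
    simp only [SetLike.mem_coe, RingHom.mem_ker, map_sub, map_one, AlgHom.coe_ringHom_mk]
    show epsP p F (MonoidAlgebra.of F (Dg p) h) - 1 = 0
    rw [epsP_of, sub_self]
  · refine (?_ : gammaA p F ≤ RingHom.ker (epsM p F : FG p F →+* F)) hx
    rw [gammaA, Ideal.span_le]
    rintro y ⟨h, hh, rfl⟩
    simp only [SetLike.mem_coe, RingHom.mem_ker, map_sub, map_one]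
    show epsM p F (MonoidAlgebra.of F (Dg p) h) - 1 = 0
    rw [epsM_of]
    obtain ⟨z, rfl⟩ := hh
    rw [map_zpow]
    have : chiF p F (aa p) = 1 := rfl
    rw [this, one_zpow, sub_self]

lemma r_mem_Asub (i : ZMod p) (hp : p.Prime) : (DihedralGroup.r i : Dg p) ∈ Asub p := by
  haveI : NeZero p := ⟨hp.pos.ne'⟩
  refine ⟨(i.val : ℤ), ?_⟩
  show (DihedralGroup.r 1 : Dg p) ^ (i.val : ℤ) = DihedralGroup.r i
  rw [zpow_natCast, DihedralGroup.r_one_pow]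
  congr 1
  exact ZMod.natCast_rightInverse i

lemma of_r_sub_one_mem (i : ZMod p) (hp : p.Prime) :
    (MonoidAlgebra.of F (Dg p) (DihedralGroup.r i) : FG p F) - 1 ∈ gammaA p F :=
  Ideal.subset_span ⟨DihedralGroup.r i, r_mem_Asub p i hp, rfl⟩

lemma of_sr_sub_mem (i : ZMod p) (hp : p.Prime) :
    (MonoidAlgebra.of F (Dg p) (DihedralGroup.sr i) : FG p F)
      - MonoidAlgebra.of F (Dg p) (bb p) ∈ gammaA p F := by
  have h : (MonoidAlgebra.of F (Dg p) (DihedralGroup.sr i) : FG p F)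
      - MonoidAlgebra.of F (Dg p) (bb p)
      = MonoidAlgebra.of F (Dg p) (bb p)
        * ((MonoidAlgebra.of F (Dg p) (DihedralGroup.r i) : FG p F) - 1) := by
    rw [mul_sub, mul_one, ← map_mul, bb, DihedralGroup.sr_mul_r, zero_add]
  rw [h]
  exact Ideal.mul_mem_left _ _ (of_r_sub_one_mem p F i hp)

lemma twoNeZeroF (hp : p.Prime) (hodd : Odd p) [CharP F p] : (2 : F) ≠ 0 := by
  have h2 : ¬ (p ∣ 2) := by
    intro h
    have heq := (Nat.prime_dvd_prime_iff_eq hp Nat.prime_two).mp h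
    rw [heq] at hodd
    exact (Nat.not_odd_iff_even.mpr even_two) hodd
  intro h
  have := (CharP.cast_eq_zero_iff F p 2).mp (by exact_mod_cast h)
  exact h2 this

lemma decomp_mem (hp : p.Prime) (hodd : Odd p) [CharP F p] (x : FG p F) :
    x - ((epsP p F x + epsM p F x) / 2) • (1 : FG p F)
      - ((epsP p F x - epsM p F x) / 2) • (MonoidAlgebra.of F (Dg p) (bb p)) ∈ gammaA p F := by
  have h2 : (2 : F) ≠ 0 := twoNeZeroF p F hp hodd
  induction x using MonoidAlgebra.induction_on with
  | of g =>
    rcases g with i | i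
    · rw [epsP_of, epsM_of]
      have hchi : chiF p F (DihedralGroup.r i) = 1 := rfl
      rw [hchi]
      have c1 : ((1 + 1 : F)) / 2 = 1 := by field_simp; ring
      have c2 : ((1 - 1 : F)) / 2 = 0 := by rw [sub_self, zero_div]
      rw [c1, c2, one_smul, zero_smul, sub_zero]
      exact of_r_sub_one_mem p F i hp
    · rw [epsP_of, epsM_of]
      have hchi : chiF p F (DihedralGroup.sr i) = -1 := rfl
      rw [hchi]
      have c1 : ((1 + -1 : F)) / 2 = 0 := by rw [add_neg_cancel, zero_div]
      have c2 : ((1 - -1 : F)) / 2 = 1 := by rw [sub_neg_eq_add, one_add_one_eq_two, div_self h2]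
      rw [c1, c2, one_smul, zero_smul, sub_zero]
      exact of_sr_sub_mem p F i hp
  | add f g hf hg =>
    have hsum := Submodule.add_mem _ hf hg
    have heq : (f - ((epsP p F f + epsM p F f) / 2) • (1 : FG p F)
        - ((epsP p F f - epsM p F f) / 2) • (MonoidAlgebra.of F (Dg p) (bb p)))
        + (g - ((epsP p F g + epsM p F g) / 2) • (1 : FG p F)
        - ((epsP p F g - epsM p F g) / 2) • (MonoidAlgebra.of F (Dg p) (bb p)))
        = (f + g) - ((epsP p F (f + g) + epsM p F (f + g)) / 2) • (1 : FG p F)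
        - ((epsP p F (f + g) - epsM p F (f + g)) / 2) • (MonoidAlgebra.of F (Dg p) (bb p)) := by
      rw [map_add, map_add]
      match_scalars <;> ring
    rwa [heq] at hsum
  | smul r f hf =>
    have hsm := Submodule.smul_mem (Submodule.restrictScalars F (gammaA p F)) r hf
    have heq : r • (f - ((epsP p F f + epsM p F f) / 2) • (1 : FG p F)
        - ((epsP p F f - epsM p F f) / 2) • (MonoidAlgebra.of F (Dg p) (bb p)))
        = (r • f) - ((epsP p F (r • f) + epsM p F (r • f)) / 2) • (1 : FG p F)
        - ((epsP p F (r • f) - epsM p F (r • f)) / 2) • (MonoidAlgebra.of F (Dg p) (bb p)) := by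
      rw [map_smul, map_smul]
      match_scalars <;> simp only [smul_eq_mul] <;> ring
    rwa [heq] at hsm

def phiL : FG p F →ₗ[F] F × F :=
  LinearMap.prod (epsP p F).toLinearMap (epsM p F).toLinearMap

lemma ker_phiL (hp : p.Prime) (hodd : Odd p) [CharP F p] :
    LinearMap.ker (phiL p F) = Submodule.restrictScalars F (gammaA p F) := by
  ext x
  simp only [LinearMap.mem_ker, Submodule.restrictScalars_mem, phiL, LinearMap.prod_apply,
    Function.prod_apply, Prod.mk_eq_zero, AlgHom.toLinearMap_apply]
  constructor
  · rintro ⟨h1, h2⟩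
    have := decomp_mem p F hp hodd x
    rwa [h1, h2, add_zero, zero_div, zero_smul, sub_zero, sub_zero, zero_div, zero_smul, sub_zero] at this
  · intro hx
    exact eps_vanish p F hx

lemma phiL_surj (hp : p.Prime) (hodd : Odd p) [CharP F p] :
    Function.Surjective (phiL p F) := by
  have h2 : (2 : F) ≠ 0 := twoNeZeroF p F hp hodd
  rintro ⟨c, d⟩
  refine ⟨((c + d) / 2) • (1 : FG p F) + ((c - d) / 2) • (MonoidAlgebra.of F (Dg p) (bb p)), ?_⟩
  have e1 : epsP p F (MonoidAlgebra.of F (Dg p) (bb p)) = 1 := epsP_of p F _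
  have e2 : epsM p F (MonoidAlgebra.of F (Dg p) (bb p)) = -1 := by
    rw [epsM_of]; rfl
  simp only [phiL, LinearMap.prod_apply, Function.prod_apply, AlgHom.toLinearMap_apply, map_add, map_smul,
    map_one, e1, e2, smul_eq_mul, Prod.mk.injEq]
  rw [Prod.smul_mk, Prod.smul_mk, Prod.mk_add_mk, Prod.mk.injEq]
  constructor <;> simp only [smul_eq_mul] <;> field_simp <;> ring

lemma finrank_FG (hp : p.Prime) : Module.finrank F (FG p F) = 2 * p := by
  haveI : NeZero p := ⟨hp.pos.ne'⟩
  have h : Module.finrank F ((Dg p) →₀ F) = Fintype.card (Dg p) := by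
    exact Module.finrank_finsupp_self F
  rw [DihedralGroup.card] at h
  exact (MonoidAlgebra.coeffLinearEquiv F).finrank_eq.trans h

lemma finrank_gammaA (hp : p.Prime) (hodd : Odd p) [CharP F p] :
    Module.finrank F (Submodule.restrictScalars F (gammaA p F)) = 2 * p - 2 := by
  haveI : NeZero p := ⟨hp.pos.ne'⟩
  haveI : FiniteDimensional F (FG p F) := by
    have : FiniteDimensional F ((Dg p) →₀ F) := inferInstance
    exact Module.Finite.equiv (MonoidAlgebra.coeffLinearEquiv F).symm
  have hrn := LinearMap.finrank_range_add_finrank_ker (phiL p F)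
  rw [LinearMap.range_eq_top.mpr (phiL_surj p F hp hodd)] at hrn
  rw [finrank_FG p F hp, ker_phiL p F hp hodd] at hrn
  have htop : Module.finrank F (⊤ : Submodule F (F × F)) = 2 := by
    rw [finrank_top]
    simp [Module.finrank_prod]
  rw [htop] at hrn
  omega

/-- The unit `1 + x` for `x ∈ Γ`. -/
def mkUnit (hp : p.Prime) [CharP F p] (x : FG p F) (hx : x ∈ gammaA p F) : (FG p F)ˣ :=
  (IsNilpotent.isUnit_one_add ⟨p, pow_p_eq_zero p F hp hx⟩).unit

lemma coe_mkUnit (hp : p.Prime) [CharP F p] (x : FG p F) (hx : x ∈ gammaA p F) :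
    ((mkUnit p F hp x hx : (FG p F)ˣ) : FG p F) = 1 + x :=
  IsUnit.unit_spec _

/-- The bijection `1 + Γ ≃ Γ`, `u ↦ u - 1`. -/
def oneGammaEquiv (hp : p.Prime) [CharP F p] :
    (oneGammaU p F) ≃ {x : FG p F // x ∈ gammaA p F} where
  toFun u := ⟨((u : (FG p F)ˣ) : FG p F) - 1, u.2⟩
  invFun x := ⟨mkUnit p F hp x.1 x.2, by
    show ((mkUnit p F hp x.1 x.2 : (FG p F)ˣ) : FG p F) - 1 ∈ gammaA p F
    rw [coe_mkUnit, add_sub_cancel_left]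
    exact x.2⟩
  left_inv u := by
    apply Subtype.ext
    apply Units.ext
    dsimp only
    rw [coe_mkUnit, add_sub_cancel]
  right_inv x := by
    apply Subtype.ext
    dsimp only
    rw [coe_mkUnit, add_sub_cancel_left]

lemma card_oneGammaU (hp : p.Prime) (hodd : Odd p) [Fintype F] [CharP F p] :
    Nat.card (oneGammaU p F) = Fintype.card F ^ (2 * p - 2) := by
  haveI : NeZero p := ⟨hp.pos.ne'⟩
  haveI : Finite (FG p F) := by
    have : Finite ((Dg p) →₀ F) := Finite.of_equiv _ Finsupp.equivFunOnFinite.symm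
    exact Finite.of_equiv _ MonoidAlgebra.coeffEquiv.symm
  rw [Nat.card_congr (oneGammaEquiv p F hp)]
  have hcongr : Nat.card {x : FG p F // x ∈ gammaA p F}
      = Nat.card (Submodule.restrictScalars F (gammaA p F)) := by
    apply Nat.card_congr
    exact Equiv.subtypeEquivRight (fun x => Iff.rfl)
  rw [hcongr]
  haveI : Fintype (Submodule.restrictScalars F (gammaA p F)) := Fintype.ofFinite _
  rw [Nat.card_eq_fintype_card]
  rw [Module.card_eq_pow_finrank (K := F), finrank_gammaA p F hp hodd]

lemma al_mem_gammaA : al p F ∈ gammaA p F := by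
  rw [gammaA_eq_span]; exact Ideal.subset_span rfl

lemma al_ne_zero (hp : p.Prime) : al p F ≠ 0 := by
  haveI : Fact p.Prime := ⟨hp⟩
  rw [al, sub_ne_zero]
  intro h
  have h1 : (MonoidAlgebra.of F (Dg p) (aa p) : FG p F) = MonoidAlgebra.of F (Dg p) 1 := by
    rw [map_one]; exact h
  have := MonoidAlgebra.of_injective h1
  rw [aa, DihedralGroup.one_def] at this
  have : (1 : ZMod p) = 0 := DihedralGroup.r.injEq _ _ ▸ this
  exact one_ne_zero this

lemma pow_p_eq_one_all (hp : p.Prime) [CharP F p] (u : oneGammaU p F) : u ^ p = 1 := by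
  have hx : ((u : (FG p F)ˣ) : FG p F) - 1 ∈ gammaA p F := u.2
  have h1 : ((u : (FG p F)ˣ) : FG p F) ^ p = 1 := by
    have h := unit_pow_p p F hp hx
    have e : (1 : FG p F) + (((u : (FG p F)ˣ) : FG p F) - 1) = ((u : (FG p F)ˣ) : FG p F) := by
      rw [add_comm, sub_add_cancel]
    rwa [e] at h
  apply Subtype.ext
  apply Units.ext
  push_cast
  exact h1

/-- `1 + Γ(A)` is a nilpotent `p`-group of order `p^{4nl}`,
`l = (p-1)/2`, of exponent `p`, and its nilpotency class is at most `p - 1`. -/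
theorem stmt16 (p n : ℕ) (hp : p.Prime) (hodd : Odd p)
    (F : Type) [Field F] [Fintype F] [CharP F p] (hcard : Fintype.card F = p ^ n) :
    ∀ l : ℕ, l = (p - 1) / 2 →
      Nat.card (oneGammaU p F) = p ^ (4 * n * l) ∧
      IsPGroup p (oneGammaU p F) ∧
      Monoid.exponent (oneGammaU p F) = p ∧
      ∃ hnil : Group.IsNilpotent (oneGammaU p F),
        @Group.nilpotencyClass (oneGammaU p F) _ ≤ p - 1 := by
  intro l hl
  haveI := nilpotent_oneGammaU p F hp
  obtain ⟨m, hm⟩ := hodd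
  refine ⟨?_, ?_, ?_, nilpotent_oneGammaU p F hp, ?_⟩
  · rw [card_oneGammaU p F hp ⟨m, hm⟩, hcard, ← pow_mul]
    congr 1
    have hl2 : l = m := by omega
    have h4 : 2 * p - 2 = 4 * m := by omega
    rw [h4, hl2]; ring
  · intro g
    exact ⟨1, by rw [pow_one]; exact pow_p_eq_one_all p F hp g⟩
  · have hdvd := Monoid.exponent_dvd_of_forall_pow_eq_one (pow_p_eq_one_all p F hp)
    rcases hp.eq_one_or_self_of_dvd _ hdvd with h1 | h
    · exfalso
      set u₀ : oneGammaU p F := ⟨mkUnit p F hp (al p F) (al_mem_gammaA p F), by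
        show ((mkUnit p F hp _ _ : (FG p F)ˣ) : FG p F) - 1 ∈ gammaA p F
        rw [coe_mkUnit, add_sub_cancel_left]
        exact al_mem_gammaA p F⟩ with hu₀
      have horder : orderOf u₀ ∣ 1 := h1 ▸ Monoid.order_dvd_exponent u₀
      have : u₀ = 1 := orderOf_eq_one_iff.mp (Nat.dvd_one.mp horder)
      have hval : ((mkUnit p F hp (al p F) (al_mem_gammaA p F) : (FG p F)ˣ) : FG p F) = 1 := by
        have := congrArg (fun w : oneGammaU p F => ((w : (FG p F)ˣ) : FG p F)) this
        simpa [hu₀] using this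
      rw [coe_mkUnit] at hval
      have : al p F = 0 := add_eq_left.mp hval
      exact al_ne_zero p F hp this
    · exact h
  · exact lowerCentralSeries_eq_bot_iff_nilpotencyClass_le.mp (lcs_eq_bot p F hp)
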